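/- Let p ∈ {3, 11} and k ≥ 0, and let E^∞(q) = 1 − c·∑_{n≥1} (∑_{d|n} χ_p(d) d^{2k}) q^n where c = (4k+2)/B_{2k+1,p}. Then as formal power series, E^∞(−q) = −E^∞(q) + (2 − 2^{2k+1})·E^∞(q²) + 2^{2k+1}·E^∞(q⁴). -/

import Mathlib

noncomputable section

instance : Fact (Nat.Prime 11) := ⟨by norm_num⟩

/-- `substPow m f` is the power series `f(X^m)`. -/
def substPow (m : ℕ) (f : PowerSeries ℚ) : PowerSeries ℚ :=
  PowerSeries.mk fun n => if m ∣ n then PowerSeries.coeff (R := ℚ) (n / m) f else 0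

/-- The generalized Bernoulli number `B_{k,χ_p}` attached to the Legendre symbol mod `p`,
via the classical formula `B_{k,χ} = f^{k-1} ∑_{j<f} χ(j) B_k(j/f)`. -/
def genBernoulli (p : ℕ) [Fact p.Prime] (k : ℕ) : ℚ :=
  (p : ℚ) ^ (k - 1) *
    ∑ j ∈ Finset.range p, (legendreSym p (j : ℤ) : ℚ) * (Polynomial.bernoulli k).eval ((j : ℚ) / p)


lemma chi_two3 : legendreSym 3 2 = -1 := by decide
lemma chi_two11 : legendreSym 11 2 = -1 := by decide
namespace Aux
variable (p : ℕ) [Fact p.Prime] (k : ℕ)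

def χ (d : ℕ) : ℚ := (legendreSym p (d : ℤ) : ℚ)

def σ (n : ℕ) : ℚ := ∑ d ∈ n.divisors, χ p d * (d : ℚ) ^ (2 * k)

def σodd (n : ℕ) : ℚ :=
  ∑ d ∈ n.divisors.filter (fun d => ¬ 2 ∣ d), χ p d * (d : ℚ) ^ (2 * k)

lemma filt (m : ℕ) :
    (2 * m).divisors.filter (fun d => ¬ 2 ∣ d) = m.divisors.filter (fun d => ¬ 2 ∣ d) := by
  ext d
  simp only [Finset.mem_filter, Nat.mem_divisors]
  constructor
  · rintro ⟨⟨hd, h0⟩, hodd⟩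
    have hcop : Nat.Coprime d 2 := Nat.coprime_two_right.mpr (Nat.odd_iff.mpr (by omega))
    exact ⟨⟨(Nat.Coprime.dvd_of_dvd_mul_left hcop hd), by omega⟩, hodd⟩
  · rintro ⟨⟨hd, h0⟩, hodd⟩
    exact ⟨⟨hd.mul_left 2, by omega⟩, hodd⟩

lemma σodd_two_mul (m : ℕ) : σodd p k (2 * m) = σodd p k m := by
  unfold σodd; rw [filt]

lemma σodd_of_odd (m : ℕ) (hm : ¬ 2 ∣ m) : σodd p k m = σ p k m := by
  unfold σodd σ
  congr 1
  rw [Finset.filter_true_of_mem]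
  intro d hd
  rw [Nat.mem_divisors] at hd
  intro h2
  exact hm (h2.trans hd.1)

lemma chi_two (hp : p = 3 ∨ p = 11) : legendreSym p 2 = -1 := by
  rcases hp with h | h <;> subst h
  · exact chi_two3
  · exact chi_two11

lemma split (hp : p = 3 ∨ p = 11) (m : ℕ) (hm : m ≠ 0) :
    σ p k (2 * m) = σodd p k m - 2 ^ (2 * k) * σ p k m := by
  have key : σ p k (2 * m) = σodd p k (2 * m) +
      ∑ d ∈ (2 * m).divisors.filter (fun d => 2 ∣ d), χ p d * (d : ℚ) ^ (2 * k) := by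
    unfold σ σodd
    rw [← Finset.sum_filter_add_sum_filter_not (2 * m).divisors (fun d => ¬ 2 ∣ d)]
    simp only [not_not]
  have heven : ∑ d ∈ (2 * m).divisors.filter (fun d => 2 ∣ d), χ p d * (d : ℚ) ^ (2 * k)
      = ∑ e ∈ m.divisors, χ p (2 * e) * ((2 * e : ℕ) : ℚ) ^ (2 * k) := by
    refine Finset.sum_nbij' (fun d => d / 2) (fun e => 2 * e) ?_ ?_ ?_ ?_ ?_
    · intro d hd
      simp only [Finset.mem_filter, Nat.mem_divisors] at hd
      obtain ⟨⟨hdvd, h0⟩, h2⟩ := hd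
      rw [Nat.mem_divisors]
      obtain ⟨e, rfl⟩ := h2
      simp only [Nat.mul_div_cancel_left e (by norm_num : 0 < 2)]
      exact ⟨(mul_dvd_mul_iff_left (two_ne_zero)).mp hdvd, by omega⟩
    · intro e he
      rw [Nat.mem_divisors] at he
      simp only [Finset.mem_filter, Nat.mem_divisors]
      exact ⟨⟨mul_dvd_mul_left 2 he.1, by omega⟩, Dvd.intro e rfl⟩
    · intro d hd
      simp only [Finset.mem_filter] at hd
      omega
    · intro e he
      omega
    · intro d hd
      simp only [Finset.mem_filter] at hd
      have : 2 * (d / 2) = d := by omega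
      rw [this]
  have hchi : ∀ e : ℕ, χ p (2 * e) = - χ p e := by
    intro e
    unfold χ
    push_cast
    rw [legendreSym.mul, chi_two p hp]
    push_cast
    ring
  have hfin : ∑ e ∈ m.divisors, χ p (2 * e) * ((2 * e : ℕ) : ℚ) ^ (2 * k)
      = -(2 ^ (2 * k) * σ p k m) := by
    unfold σ
    rw [Finset.mul_sum, ← Finset.sum_neg_distrib]
    refine Finset.sum_congr rfl fun e _ => ?_
    rw [hchi e]
    push_cast
    ring
  rw [key, σodd_two_mul, heven, hfin]
  ring

lemma sigma_id (hp : p = 3 ∨ p = 11) (m : ℕ) (hm : m ≠ 0) :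
    2 * σ p k (2 * m) = (2 - 2 ^ (2 * k + 1)) * σ p k m +
      2 ^ (2 * k + 1) * (if 2 ∣ m then σ p k (m / 2) else 0) := by
  by_cases h2 : 2 ∣ m
  · obtain ⟨r, rfl⟩ := h2
    have hr : r ≠ 0 := by omega
    rw [if_pos ⟨r, rfl⟩, Nat.mul_div_cancel_left r (by norm_num)]
    rw [split p k hp (2 * r) (by omega), split p k hp r hr, σodd_two_mul]
    ring
  · rw [if_neg h2, split p k hp m hm, σodd_of_odd p k m h2]
    ring

end Aux


theorem statement11 (p : ℕ) [Fact p.Prime] (hp : p = 3 ∨ p = 11) (k : ℕ)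
    (c : ℚ) (hc : c = (4 * k + 2 : ℚ) / genBernoulli p (2 * k + 1))
    (E : PowerSeries ℚ)
    (hE : E = PowerSeries.mk fun n =>
      if n = 0 then 1
      else -c * ∑ d ∈ n.divisors, (legendreSym p (d : ℤ) : ℚ) * (d : ℚ) ^ (2 * k)) :
    PowerSeries.rescale (-1 : ℚ) E =
      -E + ((2 : ℚ) - 2 ^ (2 * k + 1)) • substPow 2 E + (2 : ℚ) ^ (2 * k + 1) • substPow 4 E := by
  ext n
  rw [hE]
  simp only [PowerSeries.coeff_rescale, map_add, map_neg, PowerSeries.coeff_smul, substPow,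
    PowerSeries.coeff_mk, smul_eq_mul]
  rcases Nat.eq_zero_or_pos n with rfl | hn
  · norm_num
    ring
  by_cases h2 : 2 ∣ n
  · obtain ⟨m, rfl⟩ := h2
    have hm : m ≠ 0 := by omega
    have e1 : (2 * m) / 2 = m := by omega
    rw [if_neg (by omega : ¬ 2 * m = 0), if_pos (dvd_mul_right 2 m), e1, if_neg hm]
    have hpow : (-1 : ℚ) ^ (2 * m) = 1 := by rw [pow_mul]; norm_num
    rw [hpow]
    have hid := Aux.sigma_id p k hp m hm
    by_cases h2m : 2 ∣ m
    · rw [if_pos (by omega : 4 ∣ 2 * m)]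
      have e2 : 2 * m / 4 = m / 2 := by omega
      rw [e2, if_neg (by omega : ¬ m / 2 = 0)]
      rw [if_pos h2m] at hid
      unfold Aux.σ Aux.χ at hid
      linear_combination (-c) * hid
    · rw [if_neg (by omega : ¬ 4 ∣ 2 * m)]
      rw [if_neg h2m] at hid
      unfold Aux.σ Aux.χ at hid
      linear_combination (-c) * hid
  · have hodd : Odd n := Nat.odd_iff.mpr (by omega)
    rw [if_neg (by omega : ¬ n = 0), if_neg h2, if_neg (by omega : ¬ (4:ℕ) ∣ n),
      hodd.neg_one_pow]
    ring
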